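/- arXiv:2407.19743 — 2 statements merged into one kernel-verified Lean document; each statement's English description precedes it below -/
import Mathlib

section
/- Let 0 < α < 1 and let a, b : ℝ → ℝ be 2π-periodic with a ∈ C^{2,α}(𝕋) and b ∈ C^{1,α}(𝕋). Then for every x ∈ ℝ, the commutator admits the integration-by-parts representation H[a·b'](x) − a(x)·H[b'](x) = (1/2π) p.v. ∫_{−π}^{π} [ a'(y)/tan((x−y)/2) + (a(y)−a(x))/(2 sin²((x−y)/2)) ] (b(x)−b(y)) dy. -/
open Real Filter MeasureTheory Set

/-- Principal value as the limit as `δ → 0⁺`. -/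
noncomputable def pvLim (g : ℝ → ℝ) : ℝ :=
  limUnder (nhdsWithin (0 : ℝ) (Set.Ioi 0)) g

/-- Periodic Hilbert transform `H[f](x) = (1/2π) p.v. ∫_{x-π}^{x+π} f(y)/tan((x-y)/2) dy`. -/
noncomputable def Hil (f : ℝ → ℝ) (x : ℝ) : ℝ :=
  (1 / (2 * π)) * pvLim (fun δ =>
    ∫ y in {y : ℝ | y ∈ Set.Icc (x - π) (x + π) ∧ δ ≤ |x - y|},
      f y / Real.tan ((x - y) / 2))

/-- Commutator `⟦H,a⟧[g] = H[a·g] − a·H[g]`. -/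
noncomputable def commH (a g : ℝ → ℝ) (x : ℝ) : ℝ :=
  Hil (fun y => a y * g y) x - a x * Hil g x

/-- Sup norm `‖f‖_{C⁰}` on the torus (realized as a sup over ℝ). -/
noncomputable def nC0 (f : ℝ → ℝ) : ℝ := ⨆ x : ℝ, |f x|

/-- `‖f‖_{C^k} = Σ_{ℓ=0}^k ‖f^{(ℓ)}‖_{C⁰}`. -/
noncomputable def nCk (k : ℕ) (f : ℝ → ℝ) : ℝ :=
  ∑ l ∈ Finset.range (k + 1), nC0 (deriv^[l] f)

/-- The Hölder seminorm `sup_{x₁ ≠ x₂} |f(x₁) − f(x₂)|/|x₁ − x₂|^α`. -/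
noncomputable def holderSemi (α : ℝ) (f : ℝ → ℝ) : ℝ :=
  ⨆ p : ℝ × ℝ, if p.1 = p.2 then 0 else |f p.1 - f p.2| / |p.1 - p.2| ^ α

/-- `‖f‖_{C^α} = ‖f‖_{C⁰} + Hölder seminorm`. -/
noncomputable def nCa (α : ℝ) (f : ℝ → ℝ) : ℝ := nC0 f + holderSemi α f

/-- `‖f‖_{C^{k,α}} = ‖f‖_{C^{k-1}} + ‖f^{(k)}‖_{C^α}`. -/
noncomputable def nCka (k : ℕ) (α : ℝ) (f : ℝ → ℝ) : ℝ :=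
  nCk (k - 1) f + nCa α (deriv^[k] f)

/-- Membership in the Hölder space `C^{k,α}(𝕋)` (finiteness of the norm):
`f` is `k` times continuously differentiable and `f^{(k)}` is `α`-Hölder. -/
def MemCka (k : ℕ) (α : ℝ) (f : ℝ → ℝ) : Prop :=
  ContDiff ℝ (k : ℕ∞) f ∧
    ∃ K : ℝ, ∀ x y : ℝ, |deriv^[k] f x - deriv^[k] f y| ≤ K * |x - y| ^ α

/-- The traveling-wave operator `F[c,φ]`. -/
noncomputable def Fop (ε α₀ β c : ℝ) (φ : ℝ → ℝ) (ξ : ℝ) : ℝ :=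
  2 * c * deriv φ ξ + (c * α₀ + (α₀ - β) / ε) * Hil (deriv (deriv φ)) ξ
    + (1 / ε) * (deriv φ ξ + Hil φ ξ)
    + Hil (fun y => (Hil (deriv φ) y) ^ 2) ξ
    - commH φ (Hil (deriv φ)) ξ
    - (α₀ - β) * commH φ (Hil (deriv (deriv (deriv φ)))) ξ

/-- The linearized operator at the trivial solution. -/
noncomputable def Lop (ε α₀ β c : ℝ) (h : ℝ → ℝ) (ξ : ℝ) : ℝ :=
  2 * c * deriv h ξ + (c * α₀ + (α₀ - β) / ε) * Hil (deriv (deriv h)) ξ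
    + (1 / ε) * (deriv h ξ + Hil h ξ)

/-- The Gateaux derivative of `F` in `φ`. -/
noncomputable def DFop (ε α₀ β c : ℝ) (φ h : ℝ → ℝ) (ξ : ℝ) : ℝ :=
  2 * c * deriv h ξ + (c * α₀ + (α₀ - β) / ε) * Hil (deriv (deriv h)) ξ
    + (1 / ε) * (deriv h ξ + Hil h ξ)
    + 2 * Hil (fun y => Hil (deriv φ) y * Hil (deriv h) y) ξ
    - commH h (Hil (deriv φ)) ξ
    - commH φ (Hil (deriv h)) ξ
    - (α₀ - β) * commH h (Hil (deriv (deriv (deriv φ)))) ξ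
    - (α₀ - β) * commH φ (Hil (deriv (deriv (deriv h)))) ξ

namespace CIBP

lemma div_tan_eq (f u : ℝ) : f / Real.tan u = f * (Real.cos u / Real.sin u) := by
  rw [Real.tan_eq_sin_div_cos]
  rcases eq_or_ne (Real.cos u) 0 with h | h
  · simp [h]
  rcases eq_or_ne (Real.sin u) 0 with h2 | h2
  · simp [h2]
  field_simp

lemma sin_half_ne {x y : ℝ} (h1 : x ≠ y) (h2 : |x - y| ≤ π) : Real.sin ((x - y) / 2) ≠ 0 := by
  have hπ := Real.pi_pos
  obtain ⟨ha, hb⟩ := abs_le.1 h2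
  intro hs
  have h4 : -π < (x - y) / 2 := by linarith
  have h5 : (x - y) / 2 < π := by linarith
  have := (Real.sin_eq_zero_iff_of_lt_of_lt h4 h5).1 hs
  exact h1 (by linarith)

lemma abs_cot_le {u : ℝ} (h0 : u ≠ 0) (h : |u| ≤ π / 2) :
    |Real.cos u / Real.sin u| ≤ (π / 2) / |u| := by
  have hπ := Real.pi_pos
  have hu : 0 < |u| := abs_pos.2 h0
  have h1 : 2 / π * |u| ≤ Real.sin |u| := Real.mul_le_sin (abs_nonneg u) h
  have h2 : Real.sin |u| = |Real.sin u| := by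
    rcases le_or_gt 0 u with h' | h'
    · rw [abs_of_nonneg h', abs_of_nonneg (Real.sin_nonneg_of_nonneg_of_le_pi h' (by
        rw [abs_of_nonneg h'] at h; linarith))]
    · rw [abs_of_neg h', Real.sin_neg, abs_of_nonpos]
      apply Real.sin_nonpos_of_nonpos_of_neg_pi_le h'.le
      rw [abs_of_neg h'] at h; linarith
  have h3 : 0 < 2 / π * |u| := by positivity
  rw [abs_div]
  calc |Real.cos u| / |Real.sin u| ≤ 1 / (2 / π * |u|) :=
        div_le_div₀ (by norm_num) (Real.abs_cos_le_one u) h3 (h2 ▸ h1)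
    _ = (π / 2) / |u| := by field_simp


def Sset (x δ : ℝ) : Set ℝ := {y : ℝ | y ∈ Set.Icc (x - π) (x + π) ∧ δ ≤ |x - y|}

lemma Sset_eq (x δ : ℝ) :
    Sset x δ = Set.Icc (x - π) (x + π) ∩ {y : ℝ | δ ≤ |x - y|} := rfl

lemma measurableSet_T (x δ : ℝ) : MeasurableSet {y : ℝ | δ ≤ |x - y|} :=
  (isClosed_le continuous_const ((continuous_const.sub continuous_id).abs)).measurableSet

lemma measurableSet_Sset (x δ : ℝ) : MeasurableSet (Sset x δ) :=
  (Sset_eq x δ) ▸ measurableSet_Icc.inter (measurableSet_T x δ)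

lemma isCompact_Sset (x δ : ℝ) : IsCompact (Sset x δ) :=
  (Sset_eq x δ) ▸ isCompact_Icc.inter_right
    (isClosed_le continuous_const ((continuous_const.sub continuous_id).abs))

lemma mem_S_refl {x δ : ℝ} (y : ℝ) : (2 * x - y) ∈ Sset x δ ↔ y ∈ Sset x δ := by
  simp only [Sset, Set.mem_setOf_eq, Set.mem_Icc]
  have h : x - (2 * x - y) = -(x - y) := by ring
  rw [h, abs_neg]
  constructor <;> rintro ⟨⟨h1, h2⟩, h3⟩ <;> exact ⟨⟨by linarith, by linarith⟩, h3⟩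

lemma integral_cot_zero (x δ : ℝ) :
    ∫ y in Sset x δ, Real.cos ((x - y) / 2) / Real.sin ((x - y) / 2) = 0 := by
  set c : ℝ → ℝ := fun y => Real.cos ((x - y) / 2) / Real.sin ((x - y) / 2) with hc
  have key : ∀ y, (Sset x δ).indicator c (2 * x - y) = - (Sset x δ).indicator c y := by
    intro y
    have hcv : c (2 * x - y) = - c y := by
      have h1 : (x - (2 * x - y)) / 2 = -((x - y) / 2) := by ring
      simp only [hc, h1, Real.cos_neg, Real.sin_neg, div_neg]
    rcases em (y ∈ Sset x δ) with h | h
    · rw [Set.indicator_of_mem ((mem_S_refl y).2 h), Set.indicator_of_mem h, hcv]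
    · rw [Set.indicator_of_notMem (fun hm => h ((mem_S_refl y).1 hm)),
        Set.indicator_of_notMem h, neg_zero]
  have h1 : ∫ y, (Sset x δ).indicator c y = ∫ y, (Sset x δ).indicator c (2 * x - y) :=
    (integral_sub_left_eq_self ((Sset x δ).indicator c) volume (2 * x)).symm
  have h2 : ∫ y, (Sset x δ).indicator c (2 * x - y) = - ∫ y, (Sset x δ).indicator c y := by
    simp_rw [key]; exact integral_neg _
  rw [← integral_indicator (measurableSet_Sset x δ)]
  linarith [h1, h2]

lemma integrableOn_rpow_abs (x : ℝ) {r : ℝ} (hr : -1 < r) :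
    IntegrableOn (fun y => |x - y| ^ r) (Set.Icc (x - π) (x + π)) := by
  have hπ := Real.pi_pos
  have h1 : IntervalIntegrable (fun t : ℝ => t ^ r) volume 0 π := intervalIntegral.intervalIntegrable_rpow' hr
  have hR : IntegrableOn (fun y => |x - y| ^ r) (Set.Icc x (x + π)) := by
    have h2 : IntervalIntegrable (fun y : ℝ => (y - x) ^ r) volume (0 + x) (π + x) :=
      h1.comp_sub_right x
    have h3 : IntegrableOn (fun y : ℝ => (y - x) ^ r) (Set.Ioc x (x + π)) := by
      have := (intervalIntegrable_iff_integrableOn_Ioc_of_le (by linarith : (0:ℝ) + x ≤ π + x)).1 h2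
      simpa [zero_add, add_comm] using this
    rw [integrableOn_Icc_iff_integrableOn_Ioc]
    exact h3.congr_fun (fun y hy => by
      rw [abs_sub_comm, abs_of_nonneg (by linarith [hy.1] : (0:ℝ) ≤ y - x)]) measurableSet_Ioc
  have hL : IntegrableOn (fun y => |x - y| ^ r) (Set.Icc (x - π) x) := by
    have h2 : IntervalIntegrable (fun y : ℝ => (x - y) ^ r) volume (x - π) (x - 0) :=
      (h1.comp_sub_left x).symm
    have h3 : IntegrableOn (fun y : ℝ => (x - y) ^ r) (Set.Ioc (x - π) x) := by
      have := (intervalIntegrable_iff_integrableOn_Ioc_of_le (by linarith : x - π ≤ x - 0)).1 h2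
      simpa using this
    rw [integrableOn_Icc_iff_integrableOn_Ioc]
    exact h3.congr_fun (fun y hy => by
      rw [abs_of_nonneg (by linarith [hy.2] : (0:ℝ) ≤ x - y)]) measurableSet_Ioc
  exact (hL.union hR).mono_set (Set.Icc_subset_Icc_union_Icc)


lemma hol_bound {α x y K : ℝ} (hα0 : 0 < α) (hα1 : α < 1)
    {f : ℝ → ℝ} (hy : y ∈ Set.Icc (x - π) (x + π)) (hyx : y ≠ x)
    (hK : ∀ y ∈ Set.Icc (x - π) (x + π), |f y - f x| ≤ K * |x - y| ^ α) :
    |(f y - f x) * (Real.cos ((x - y) / 2) / Real.sin ((x - y) / 2))|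
      ≤ (|K| * π) * |x - y| ^ (α - 1) := by
  have hπ := Real.pi_pos
  have hxy : 0 < |x - y| := abs_pos.2 (sub_ne_zero.2 (Ne.symm hyx))
  obtain ⟨hy1, hy2⟩ := hy
  have hle : |x - y| ≤ π := abs_le.2 ⟨by linarith, by linarith⟩
  have hu0 : (x - y) / 2 ≠ 0 := div_ne_zero (sub_ne_zero.2 (Ne.symm hyx)) two_ne_zero
  have huabs : |(x - y) / 2| = |x - y| / 2 := by rw [abs_div, abs_two]
  have hcb : |Real.cos ((x - y) / 2) / Real.sin ((x - y) / 2)| ≤ π / |x - y| := by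
    calc |Real.cos ((x - y) / 2) / Real.sin ((x - y) / 2)|
        ≤ (π / 2) / |(x - y) / 2| := abs_cot_le hu0 (by rw [huabs]; linarith)
      _ = π / |x - y| := by rw [huabs]; field_simp
  have hKb : 0 ≤ K * |x - y| ^ α := le_trans (abs_nonneg _) (hK y ⟨hy1, hy2⟩)
  calc |(f y - f x) * (Real.cos ((x - y) / 2) / Real.sin ((x - y) / 2))|
      = |f y - f x| * |Real.cos ((x - y) / 2) / Real.sin ((x - y) / 2)| := abs_mul _ _
    _ ≤ (K * |x - y| ^ α) * (π / |x - y|) :=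
        mul_le_mul (hK y ⟨hy1, hy2⟩) hcb (abs_nonneg _) hKb
    _ ≤ (|K| * |x - y| ^ α) * (π / |x - y|) := by
        apply mul_le_mul_of_nonneg_right _ (by positivity)
        exact mul_le_mul_of_nonneg_right (le_abs_self K) (Real.rpow_nonneg (abs_nonneg _) α)
    _ = (|K| * π) * |x - y| ^ (α - 1) := by
        rw [Real.rpow_sub_one hxy.ne']; field_simp

lemma tendsto_pv {α : ℝ} (hα0 : 0 < α) (hα1 : α < 1) (x : ℝ) (f : ℝ → ℝ) (hf : Continuous f)
    (K : ℝ) (hK : ∀ y ∈ Set.Icc (x - π) (x + π), |f y - f x| ≤ K * |x - y| ^ α) :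
    Tendsto (fun δ => ∫ y in Sset x δ, f y / Real.tan ((x - y) / 2)) (nhdsWithin (0:ℝ) (Set.Ioi 0))
      (nhds (∫ y in Set.Icc (x - π) (x + π),
        (f y - f x) * (Real.cos ((x - y) / 2) / Real.sin ((x - y) / 2)))) := by
  have hπ := Real.pi_pos
  set c : ℝ → ℝ := fun y => Real.cos ((x - y) / 2) / Real.sin ((x - y) / 2) with hc
  set h : ℝ → ℝ := fun y => (f y - f x) * c y with hh
  have hcont2 : Continuous (fun y : ℝ => (x - y) / 2) :=
    (continuous_const.sub continuous_id).div_const 2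
  have hmc : Measurable c :=
    (Real.continuous_cos.comp hcont2).measurable.div (Real.continuous_sin.comp hcont2).measurable
  have hmh : Measurable h := (hf.measurable.sub measurable_const).mul hmc
  have hptbound : ∀ y ∈ Set.Icc (x - π) (x + π), y ≠ x → |h y| ≤ (|K| * π) * |x - y| ^ (α - 1) :=
    fun y hy hyx => hol_bound hα0 hα1 hy hyx hK
  have hbound : IntegrableOn (fun y => (|K| * π) * |x - y| ^ (α - 1))
      (Set.Icc (x - π) (x + π)) := (integrableOn_rpow_abs x (by linarith)).const_mul _
  -- dominated convergence for the regularized integrals of h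
  have main : Tendsto (fun δ => ∫ y in Set.Icc (x - π) (x + π),
        ({y : ℝ | δ ≤ |x - y|}).indicator h y) (nhdsWithin (0:ℝ) (Set.Ioi 0))
      (nhds (∫ y in Set.Icc (x - π) (x + π), h y)) := by
    apply tendsto_integral_filter_of_dominated_convergence
      (bound := fun y => (|K| * π) * |x - y| ^ (α - 1))
    · exact Eventually.of_forall fun δ => (hmh.indicator (measurableSet_T x δ)).aestronglyMeasurable
    · filter_upwards [self_mem_nhdsWithin] with δ (hδ : (0:ℝ) < δ)
      refine (ae_restrict_mem measurableSet_Icc).mono fun y hy => ?_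
      rcases em (y ∈ {y : ℝ | δ ≤ |x - y|}) with hm | hm
      · rw [Set.indicator_of_mem hm]
        have hyx : y ≠ x := by
          intro hEq; subst hEq; simp only [Set.mem_setOf_eq, sub_self, abs_zero] at hm; linarith
        exact (Real.norm_eq_abs _) ▸ hptbound y hy hyx
      · rw [Set.indicator_of_notMem hm]; simp only [norm_zero]; positivity
    · exact hbound
    · have h0 : ∀ᵐ y ∂(volume.restrict (Set.Icc (x - π) (x + π))), y ≠ x := by
        refine ae_restrict_of_ae ?_
        refine (ae_iff).2 ?_
        have : {y : ℝ | ¬ y ≠ x} = {x} := by ext y; simp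
        rw [this]; exact measure_singleton x
      refine h0.mono fun y hy => ?_
      have hev : ∀ᶠ δ in nhdsWithin (0:ℝ) (Set.Ioi 0), δ ∈ Set.Ioo 0 |x - y| :=
        Ioo_mem_nhdsGT_of_mem ⟨le_refl _, abs_pos.2 (sub_ne_zero.2 (Ne.symm hy))⟩
      refine Tendsto.congr' ?_ tendsto_const_nhds
      filter_upwards [hev] with δ hδ
      exact (Set.indicator_of_mem (show y ∈ {y : ℝ | δ ≤ |x - y|} from hδ.2.le) h).symm
  -- identify the regularized integrals
  have key : (fun δ => ∫ y in Sset x δ, f y / Real.tan ((x - y) / 2)) =ᶠ[nhdsWithin (0:ℝ) (Set.Ioi 0)]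
      (fun δ => ∫ y in Set.Icc (x - π) (x + π), ({y : ℝ | δ ≤ |x - y|}).indicator h y) := by
    filter_upwards [self_mem_nhdsWithin] with δ (hδ : (0:ℝ) < δ)
    have hSne : ∀ y ∈ Sset x δ, Real.sin ((x - y) / 2) ≠ 0 := by
      intro y hy
      obtain ⟨hy1, hy2⟩ := hy
      refine sin_half_ne ?_ (abs_le.2 ⟨by linarith [hy1.1, hy1.2], by linarith [hy1.1, hy1.2]⟩)
      intro hEq
      rw [hEq] at hy2; simp only [sub_self, abs_zero] at hy2; linarith
    have hcont2 : Continuous (fun y : ℝ => (x - y) / 2) :=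
      (continuous_const.sub continuous_id).div_const 2
    have hcc : ContinuousOn c (Sset x δ) := by
      apply ContinuousOn.div
      · exact (Real.continuous_cos.comp hcont2).continuousOn
      · exact (Real.continuous_sin.comp hcont2).continuousOn
      · exact hSne
    have hic : IntegrableOn c (Sset x δ) :=
      hcc.integrableOn_compact (isCompact_Sset x δ)
    have hihc : IntegrableOn h (Sset x δ) :=
      ((hf.continuousOn.sub continuousOn_const).mul hcc).integrableOn_compact (isCompact_Sset x δ)
    have h1 : (∫ y in Sset x δ, f y / Real.tan ((x - y) / 2)) = ∫ y in Sset x δ, f y * c y := by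
      simp_rw [div_tan_eq]; rfl
    have h2 : (∫ y in Sset x δ, f y * c y) = (∫ y in Sset x δ, h y) + f x * ∫ y in Sset x δ, c y := by
      rw [← integral_const_mul]
      rw [← integral_add hihc (hic.const_mul (f x))]
      congr 1; funext y; simp only [hh]; ring
    rw [h1, h2, integral_cot_zero x δ, mul_zero, add_zero]
    rw [setIntegral_indicator (measurableSet_T x δ), ← Sset_eq]
  exact Tendsto.congr' key.symm main
lemma ibp_interval (x p q : ℝ) (a b : ℝ → ℝ) (ha : ContDiff ℝ 2 a) (hb : ContDiff ℝ 1 b)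
    (hpq : p ≤ q) (hs : ∀ y ∈ Set.Icc p q, Real.sin ((x - y) / 2) ≠ 0) :
    ∫ y in p..q, (a y - a x) * (deriv b y * (Real.cos ((x - y) / 2) / Real.sin ((x - y) / 2)))
      = (a q - a x) * (Real.cos ((x - q) / 2) / Real.sin ((x - q) / 2)) * (b q - b x)
        - (a p - a x) * (Real.cos ((x - p) / 2) / Real.sin ((x - p) / 2)) * (b p - b x)
        + ∫ y in p..q, (deriv a y * (Real.cos ((x - y) / 2) / Real.sin ((x - y) / 2))
            + (a y - a x) * (1 / (2 * Real.sin ((x - y) / 2) ^ 2))) * (b x - b y) := by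
  have huIcc : Set.uIcc p q = Set.Icc p q := Set.uIcc_of_le hpq
  set u : ℝ → ℝ := fun y => (a y - a x) * (Real.cos ((x - y) / 2) / Real.sin ((x - y) / 2)) with hu_def
  set u' : ℝ → ℝ := fun y => deriv a y * (Real.cos ((x - y) / 2) / Real.sin ((x - y) / 2))
      + (a y - a x) * (1 / (2 * Real.sin ((x - y) / 2) ^ 2)) with hu'_def
  have hcont2 : Continuous (fun y : ℝ => (x - y) / 2) :=
    (continuous_const.sub continuous_id).div_const 2
  have hu : ∀ y ∈ Set.uIcc p q, HasDerivAt u (u' y) y := by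
    intro y hy
    rw [huIcc] at hy
    have hsy := hs y hy
    have hg : HasDerivAt (fun y : ℝ => (x - y) / 2) (-(1 / 2)) y := by
      exact (((hasDerivAt_id y).const_sub x).div_const 2).congr_deriv (by norm_num)
    have hcos : HasDerivAt (fun y : ℝ => Real.cos ((x - y) / 2))
        (Real.sin ((x - y) / 2) * (1 / 2)) y := by
      have := (Real.hasDerivAt_cos ((x - y) / 2)).comp y hg
      exact this.congr_deriv (by ring)
    have hsin : HasDerivAt (fun y : ℝ => Real.sin ((x - y) / 2))
        (-(Real.cos ((x - y) / 2) * (1 / 2))) y := by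
      have := (Real.hasDerivAt_sin ((x - y) / 2)).comp y hg
      exact this.congr_deriv (by ring)
    have hquot := hcos.div hsin hsy
    have hay : HasDerivAt (fun y => a y - a x) (deriv a y) y :=
      ((ha.differentiable (by norm_num)).differentiableAt.hasDerivAt).sub_const (a x)
    have hmul := hay.mul hquot
    have hpy : Real.sin ((x - y) / 2) ^ 2 + Real.cos ((x - y) / 2) ^ 2 = 1 :=
      Real.sin_sq_add_cos_sq _
    have hD : (Real.sin ((x - y) / 2) * (1 / 2) * Real.sin ((x - y) / 2) -
        Real.cos ((x - y) / 2) * -(Real.cos ((x - y) / 2) * (1 / 2))) / Real.sin ((x - y) / 2) ^ 2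
        = 1 / (2 * Real.sin ((x - y) / 2) ^ 2) := by
      rw [div_eq_div_iff (pow_ne_zero 2 hsy) (mul_ne_zero two_ne_zero (pow_ne_zero 2 hsy))]
      linear_combination (Real.sin ((x - y) / 2) ^ 2) * hpy
    simp only [hu'_def]
    rw [← hD]
    exact hmul
  have hv : ∀ y ∈ Set.uIcc p q, HasDerivAt (fun y => b y - b x) (deriv b y) y := fun y _ =>
    ((hb.differentiable one_ne_zero).differentiableAt.hasDerivAt).sub_const (b x)
  have hcc : ContinuousOn (fun y => Real.cos ((x - y) / 2) / Real.sin ((x - y) / 2))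
      (Set.Icc p q) :=
    (Real.continuous_cos.comp hcont2).continuousOn.div
      (Real.continuous_sin.comp hcont2).continuousOn hs
  have hu'i : IntervalIntegrable u' volume p q := by
    apply ContinuousOn.intervalIntegrable
    rw [huIcc]
    apply ContinuousOn.add
    · exact ((ha.continuous_deriv (by norm_num)).continuousOn).mul hcc
    · refine ((ha.continuous.continuousOn.sub continuousOn_const)).mul ?_
      refine continuousOn_const.div
        ((continuous_const.mul ((Real.continuous_sin.comp hcont2).pow 2)).continuousOn) ?_
      intro y hy
      exact mul_ne_zero two_ne_zero (pow_ne_zero 2 (hs y hy))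
  have hv'i : IntervalIntegrable (deriv b) volume p q :=
    (hb.continuous_deriv le_rfl).intervalIntegrable p q
  have hibp := intervalIntegral.integral_mul_deriv_eq_deriv_mul hu hv hu'i hv'i
  have hL : (∫ y in p..q, (a y - a x) * (deriv b y * (Real.cos ((x - y) / 2) / Real.sin ((x - y) / 2))))
      = ∫ y in p..q, u y * deriv b y := by
    apply intervalIntegral.integral_congr
    intro y _
    simp only [hu_def]; ring
  have hR : (∫ y in p..q, (deriv a y * (Real.cos ((x - y) / 2) / Real.sin ((x - y) / 2))
            + (a y - a x) * (1 / (2 * Real.sin ((x - y) / 2) ^ 2))) * (b x - b y))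
      = - ∫ y in p..q, u' y * (b y - b x) := by
    rw [← intervalIntegral.integral_neg]
    apply intervalIntegral.integral_congr
    intro y _
    simp only [hu'_def]; ring
  rw [hL, hR, hibp]
  simp only [hu_def]
  ring


lemma ibp_piece (x p q : ℝ) (a b : ℝ → ℝ) (ha : ContDiff ℝ 2 a) (hb : ContDiff ℝ 1 b)
    (hpq : p ≤ q) (hs : ∀ y ∈ Set.Icc p q, Real.sin ((x - y) / 2) ≠ 0) :
    (∫ y in Set.Icc p q, (a y * deriv b y) / Real.tan ((x - y) / 2))
      - a x * ∫ y in Set.Icc p q, deriv b y / Real.tan ((x - y) / 2)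
    = (a q - a x) * (Real.cos ((x - q) / 2) / Real.sin ((x - q) / 2)) * (b q - b x)
      - (a p - a x) * (Real.cos ((x - p) / 2) / Real.sin ((x - p) / 2)) * (b p - b x)
      + ∫ y in Set.Icc p q, (deriv a y / Real.tan ((x - y) / 2)
          + (a y - a x) / (2 * Real.sin ((x - y) / 2) ^ 2)) * (b x - b y) := by
  have hIcc : ∀ f : ℝ → ℝ, (∫ y in Set.Icc p q, f y) = ∫ y in p..q, f y := by
    intro f
    rw [intervalIntegral.integral_of_le hpq, integral_Icc_eq_integral_Ioc]
  rw [hIcc, hIcc, hIcc]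
  simp only [div_tan_eq]
  have hcont2 : Continuous (fun y : ℝ => (x - y) / 2) :=
    (continuous_const.sub continuous_id).div_const 2
  have hcc : ContinuousOn (fun y => Real.cos ((x - y) / 2) / Real.sin ((x - y) / 2))
      (Set.Icc p q) :=
    (Real.continuous_cos.comp hcont2).continuousOn.div
      (Real.continuous_sin.comp hcont2).continuousOn hs
  have hint2 : IntervalIntegrable
      (fun y => deriv b y * (Real.cos ((x - y) / 2) / Real.sin ((x - y) / 2))) volume p q := by
    apply ContinuousOn.intervalIntegrable
    rw [Set.uIcc_of_le hpq]
    exact ((hb.continuous_deriv le_rfl).continuousOn).mul hcc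
  have hint1 : IntervalIntegrable
      (fun y => a y * deriv b y * (Real.cos ((x - y) / 2) / Real.sin ((x - y) / 2))) volume p q := by
    apply ContinuousOn.intervalIntegrable
    rw [Set.uIcc_of_le hpq]
    exact (ha.continuous.continuousOn.mul ((hb.continuous_deriv le_rfl).continuousOn)).mul hcc
  have hlin : (∫ y in p..q, a y * deriv b y * (Real.cos ((x - y) / 2) / Real.sin ((x - y) / 2)))
      - a x * ∫ y in p..q, deriv b y * (Real.cos ((x - y) / 2) / Real.sin ((x - y) / 2))
      = ∫ y in p..q, (a y - a x) * (deriv b y * (Real.cos ((x - y) / 2) / Real.sin ((x - y) / 2))) := by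
    rw [← intervalIntegral.integral_const_mul, ← intervalIntegral.integral_sub hint1
      (hint2.const_mul (a x))]
    apply intervalIntegral.integral_congr
    intro y _
    ring
  rw [hlin, ibp_interval x p q a b ha hb hpq hs]
  congr 1
  apply intervalIntegral.integral_congr
  intro y _
  ring

lemma Sset_split {x δ : ℝ} (hδ : 0 < δ) (hδπ : δ < π) :
    Sset x δ = Set.Icc (x - π) (x - δ) ∪ Set.Icc (x + δ) (x + π) := by
  have hπ := Real.pi_pos
  ext y
  simp only [Sset, Set.mem_setOf_eq, Set.mem_Icc, Set.mem_union, le_abs]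
  constructor
  · rintro ⟨⟨h1, h2⟩, h3 | h3⟩
    · exact Or.inl ⟨h1, by linarith⟩
    · exact Or.inr ⟨by linarith, h2⟩
  · rintro (⟨h1, h2⟩ | ⟨h1, h2⟩)
    · exact ⟨⟨h1, by linarith⟩, Or.inl (by linarith)⟩
    · exact ⟨⟨by linarith, h2⟩, Or.inr (by linarith)⟩

lemma sin_ne_on_piece {x δ : ℝ} (hδ : 0 < δ) (hδπ : δ < π) :
    (∀ y ∈ Set.Icc (x - π) (x - δ), Real.sin ((x - y) / 2) ≠ 0) ∧
    (∀ y ∈ Set.Icc (x + δ) (x + π), Real.sin ((x - y) / 2) ≠ 0) := by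
  have hπ := Real.pi_pos
  constructor <;> intro y hy <;> obtain ⟨h1, h2⟩ := hy <;>
    exact sin_half_ne (fun h => by rw [h] at h1 h2; linarith)
      (abs_le.2 ⟨by linarith, by linarith⟩)

lemma split_ibp (x δ : ℝ) (hδ : 0 < δ) (hδπ : δ < π) (a b : ℝ → ℝ)
    (ha : ContDiff ℝ 2 a) (hb : ContDiff ℝ 1 b) :
    (∫ y in Sset x δ, (a y * deriv b y) / Real.tan ((x - y) / 2))
      - a x * ∫ y in Sset x δ, deriv b y / Real.tan ((x - y) / 2)
    = (∫ y in Sset x δ, (deriv a y / Real.tan ((x - y) / 2)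
          + (a y - a x) / (2 * Real.sin ((x - y) / 2) ^ 2)) * (b x - b y))
      + ((a (x - δ) - a x) * (Real.cos ((x - (x - δ)) / 2) / Real.sin ((x - (x - δ)) / 2))
            * (b (x - δ) - b x)
         - (a (x + δ) - a x) * (Real.cos ((x - (x + δ)) / 2) / Real.sin ((x - (x + δ)) / 2))
            * (b (x + δ) - b x)) := by
  have hπ := Real.pi_pos
  obtain ⟨hsL, hsR⟩ := sin_ne_on_piece (x := x) hδ hδπ
  have hcont2 : Continuous (fun y : ℝ => (x - y) / 2) :=
    (continuous_const.sub continuous_id).div_const 2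
  have hdisj : Disjoint (Set.Icc (x - π) (x - δ)) (Set.Icc (x + δ) (x + π)) := by
    rw [Set.disjoint_left]
    intro y h1 h2
    simp only [Set.mem_Icc] at h1 h2
    linarith [h1.2, h2.1]
  have hI : ∀ (p q : ℝ), (∀ y ∈ Set.Icc p q, Real.sin ((x - y) / 2) ≠ 0) →
      IntegrableOn (fun y => (a y * deriv b y) / Real.tan ((x - y) / 2)) (Set.Icc p q) ∧
      IntegrableOn (fun y => deriv b y / Real.tan ((x - y) / 2)) (Set.Icc p q) ∧
      IntegrableOn (fun y => (deriv a y / Real.tan ((x - y) / 2)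
        + (a y - a x) / (2 * Real.sin ((x - y) / 2) ^ 2)) * (b x - b y)) (Set.Icc p q) := by
    intro p q hss
    have hcc : ContinuousOn (fun y => Real.cos ((x - y) / 2) / Real.sin ((x - y) / 2))
        (Set.Icc p q) :=
      (Real.continuous_cos.comp hcont2).continuousOn.div
        (Real.continuous_sin.comp hcont2).continuousOn hss
    refine ⟨?_, ?_, ?_⟩
    · exact (((ha.continuous.continuousOn.mul
        (hb.continuous_deriv le_rfl).continuousOn).mul hcc).congr
        (fun y _ => div_tan_eq _ _)).integrableOn_compact isCompact_Icc
    · exact ((((hb.continuous_deriv le_rfl).continuousOn).mul hcc).congr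
        (fun y _ => div_tan_eq _ _)).integrableOn_compact isCompact_Icc
    · refine ContinuousOn.integrableOn_compact isCompact_Icc ?_
      refine ContinuousOn.mul (ContinuousOn.add ?_ ?_)
        (continuousOn_const.sub hb.continuous.continuousOn)
      · exact (((ha.continuous_deriv (by norm_num)).continuousOn).mul hcc).congr
          (fun y _ => div_tan_eq _ _)
      · refine (ha.continuous.continuousOn.sub continuousOn_const).div
          ((continuous_const.mul ((Real.continuous_sin.comp hcont2).pow 2)).continuousOn) ?_
        intro y hy
        exact mul_ne_zero two_ne_zero (pow_ne_zero 2 (hss y hy))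
  obtain ⟨hL1, hL2, hL3⟩ := hI _ _ hsL
  obtain ⟨hR1, hR2, hR3⟩ := hI _ _ hsR
  rw [Sset_split hδ hδπ, setIntegral_union hdisj measurableSet_Icc hL1 hR1,
    setIntegral_union hdisj measurableSet_Icc hL2 hR2,
    setIntegral_union hdisj measurableSet_Icc hL3 hR3]
  have hpqL : x - π ≤ x - δ := by linarith
  have hpqR : x + δ ≤ x + π := by linarith
  have eL := ibp_piece x (x - π) (x - δ) a b ha hb hpqL hsL
  have eR := ibp_piece x (x + δ) (x + π) a b ha hb hpqR hsR
  have hbL : (a (x - π) - a x) * (Real.cos ((x - (x - π)) / 2) / Real.sin ((x - (x - π)) / 2))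
      * (b (x - π) - b x) = 0 := by
    rw [show (x - (x - π)) / 2 = π / 2 by ring, Real.cos_pi_div_two, zero_div, mul_zero, zero_mul]
  have hbR : (a (x + π) - a x) * (Real.cos ((x - (x + π)) / 2) / Real.sin ((x - (x + π)) / 2))
      * (b (x + π) - b x) = 0 := by
    rw [show (x - (x + π)) / 2 = -(π / 2) by ring, Real.cos_neg, Real.cos_pi_div_two, zero_div,
      mul_zero, zero_mul]
  rw [mul_add]
  linarith [eL, eR, hbL, hbR]

lemma lip_bound (x : ℝ) (f : ℝ → ℝ) (hf : ContDiff ℝ 1 f) :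
    ∃ C : ℝ, 0 ≤ C ∧ ∀ y ∈ Set.Icc (x - π) (x + π), |f y - f x| ≤ C * |x - y| := by
  have hπ := Real.pi_pos
  obtain ⟨C, hC⟩ := (isCompact_Icc (a := x - π) (b := x + π)).exists_bound_of_continuousOn
    (hf.continuous_deriv le_rfl).continuousOn
  refine ⟨max C 0, le_max_right _ _, fun y hy => ?_⟩
  have hx : x ∈ Set.Icc (x - π) (x + π) := ⟨by linarith, by linarith⟩
  have h := Convex.norm_image_sub_le_of_norm_deriv_le (f := f) (s := Set.Icc (x - π) (x + π)) (C := max C 0)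
    (fun z _ => (hf.differentiable one_ne_zero).differentiableAt)
    (fun z hz => (hC z hz).trans (le_max_left _ _)) (convex_Icc _ _) hx hy
  simpa [Real.norm_eq_abs, abs_sub_comm x y] using h

lemma rpow_interp {α t : ℝ} (hα0 : 0 < α) (hα1 : α < 1) (h0 : 0 ≤ t) (ht : t ≤ π) :
    t ≤ π ^ (1 - α) * t ^ α := by
  rcases h0.eq_or_lt with heq | hpos
  · rw [← heq, Real.zero_rpow hα0.ne', mul_zero]
  · have h1 : t = t ^ (1 - α) * t ^ α := by
      rw [← Real.rpow_add hpos, sub_add_cancel, Real.rpow_one]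
    calc t = t ^ (1 - α) * t ^ α := h1
      _ ≤ π ^ (1 - α) * t ^ α :=
        mul_le_mul_of_nonneg_right (Real.rpow_le_rpow h0 ht (by linarith))
          (Real.rpow_nonneg h0 α)

end CIBP

open CIBP in
theorem commutator_ibp_representation' (α : ℝ) (hα0 : 0 < α) (hα1 : α < 1)
    (a b : ℝ → ℝ)
    (haCD : ContDiff ℝ 2 a) (hbCD : ContDiff ℝ 1 b)
    (Kb : ℝ) (hKb : ∀ x y : ℝ, |deriv b x - deriv b y| ≤ Kb * |x - y| ^ α) (x : ℝ) :
    (1 / (2 * π)) * limUnder (nhdsWithin (0:ℝ) (Set.Ioi 0)) (fun δ =>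
        ∫ y in Sset x δ, (a y * deriv b y) / Real.tan ((x - y) / 2))
      - a x * ((1 / (2 * π)) * limUnder (nhdsWithin (0:ℝ) (Set.Ioi 0)) (fun δ =>
        ∫ y in Sset x δ, deriv b y / Real.tan ((x - y) / 2))) =
    (1 / (2 * π)) * limUnder (nhdsWithin (0:ℝ) (Set.Ioi 0)) (fun δ =>
        ∫ y in Sset x δ,
          (deriv a y / Real.tan ((x - y) / 2) +
            (a y - a x) / (2 * Real.sin ((x - y) / 2) ^ 2)) * (b x - b y)) := by
  have hπ := Real.pi_pos
  have ha1 : ContDiff ℝ 1 a := haCD.of_le (by norm_num)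
  have hcb' : Continuous (deriv b) := hbCD.continuous_deriv le_rfl
  have hK2 : ∀ y ∈ Set.Icc (x - π) (x + π), |deriv b y - deriv b x| ≤ Kb * |x - y| ^ α := by
    intro y _
    have h := hKb y x
    rwa [abs_sub_comm y x] at h
  have hG2 := tendsto_pv hα0 hα1 x (deriv b) hcb' Kb hK2
  obtain ⟨Ma, hMa0, hMa⟩ : ∃ M : ℝ, 0 ≤ M ∧ ∀ y ∈ Set.Icc (x - π) (x + π), |a y| ≤ M := by
    obtain ⟨M, hM⟩ := isCompact_Icc.exists_bound_of_continuousOn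
      (haCD.continuous.continuousOn (s := Set.Icc (x - π) (x + π)))
    exact ⟨max M 0, le_max_right _ _, fun y hy => (hM y hy).trans (le_max_left _ _)⟩
  obtain ⟨Ca, hCa0, hCa⟩ := lip_bound x a ha1
  obtain ⟨Cb, hCb0, hCb⟩ := lip_bound x b hbCD
  have hK1 : ∀ y ∈ Set.Icc (x - π) (x + π),
      |a y * deriv b y - a x * deriv b x|
        ≤ (Ma * Kb + |deriv b x| * (Ca * π ^ (1 - α))) * |x - y| ^ α := by
    intro y hy
    have habs : |x - y| ≤ π := abs_le.2 ⟨by linarith [hy.2], by linarith [hy.1]⟩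
    have h1 : a y * deriv b y - a x * deriv b x
        = a y * (deriv b y - deriv b x) + deriv b x * (a y - a x) := by ring
    have hKb0 : 0 ≤ Kb * |x - y| ^ α := le_trans (abs_nonneg _) (hK2 y hy)
    calc |a y * deriv b y - a x * deriv b x|
        = |a y * (deriv b y - deriv b x) + deriv b x * (a y - a x)| := by rw [h1]
      _ ≤ |a y * (deriv b y - deriv b x)| + |deriv b x * (a y - a x)| := abs_add_le _ _
      _ = |a y| * |deriv b y - deriv b x| + |deriv b x| * |a y - a x| := by
          rw [abs_mul, abs_mul]
      _ ≤ Ma * (Kb * |x - y| ^ α) + |deriv b x| * (Ca * (π ^ (1 - α) * |x - y| ^ α)) := by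
          refine add_le_add (mul_le_mul (hMa y hy) (hK2 y hy) (abs_nonneg _) hMa0) ?_
          refine mul_le_mul_of_nonneg_left ?_ (abs_nonneg _)
          calc |a y - a x| ≤ Ca * |x - y| := hCa y hy
            _ ≤ Ca * (π ^ (1 - α) * |x - y| ^ α) :=
              mul_le_mul_of_nonneg_left (rpow_interp hα0 hα1 (abs_nonneg _) habs) hCa0
      _ = (Ma * Kb + |deriv b x| * (Ca * π ^ (1 - α))) * |x - y| ^ α := by ring
  have hca : Continuous (fun y => a y * deriv b y) := haCD.continuous.mul hcb'
  have hG1 : Filter.Tendsto (fun δ => ∫ y in Sset x δ,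
      (a y * deriv b y) / Real.tan ((x - y) / 2)) (nhdsWithin (0:ℝ) (Set.Ioi 0))
      (nhds (∫ y in Set.Icc (x - π) (x + π), (a y * deriv b y - a x * deriv b x) *
        (Real.cos ((x - y) / 2) / Real.sin ((x - y) / 2)))) :=
    tendsto_pv hα0 hα1 x (fun y => a y * deriv b y) hca _ hK1
  -- boundary terms
  set B : ℝ → ℝ := fun δ =>
    (a (x - δ) - a x) * (Real.cos ((x - (x - δ)) / 2) / Real.sin ((x - (x - δ)) / 2))
      * (b (x - δ) - b x)
    - (a (x + δ) - a x) * (Real.cos ((x - (x + δ)) / 2) / Real.sin ((x - (x + δ)) / 2))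
      * (b (x + δ) - b x) with hBdef
  have hBbound : ∀ δ ∈ Set.Ioo (0:ℝ) π, |B δ| ≤ 2 * (Ca * Cb * π) * δ := by
    intro δ hδ
    obtain ⟨hδ0, hδπ⟩ := hδ
    have hcot : ∀ s : ℝ, s = δ ∨ s = -δ →
        |Real.cos ((s) / 2) / Real.sin ((s) / 2)| ≤ π / δ := by
      intro s hs
      have hne : s / 2 ≠ 0 := by rcases hs with rfl | rfl <;> simp <;> linarith
      have habs : |s / 2| = δ / 2 := by
        rcases hs with rfl | rfl
        · rw [abs_div, abs_two, abs_of_pos hδ0]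
        · rw [abs_div, abs_two, abs_neg, abs_of_pos hδ0]
      have h := abs_cot_le hne (by rw [habs]; linarith)
      rw [habs] at h
      calc |Real.cos (s / 2) / Real.sin (s / 2)| ≤ (π / 2) / (δ / 2) := h
        _ = π / δ := by field_simp
    have hterm : ∀ z : ℝ, z ∈ Set.Icc (x - π) (x + π) → |x - z| = δ →
        |(a z - a x) * (Real.cos ((x - z) / 2) / Real.sin ((x - z) / 2)) * (b z - b x)|
          ≤ Ca * Cb * π * δ := by
      intro z hz habsz
      have h1 : |a z - a x| ≤ Ca * δ := by
        have := hCa z hz; rwa [habsz] at this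
      have h3 : |b z - b x| ≤ Cb * δ := by
        have := hCb z hz; rwa [habsz] at this
      have h2 : |Real.cos ((x - z) / 2) / Real.sin ((x - z) / 2)| ≤ π / δ := by
        have : x - z = δ ∨ x - z = -δ := by
          rcases abs_eq (le_of_lt hδ0) |>.1 habsz with h | h
          · exact Or.inl h
          · exact Or.inr h
        exact hcot (x - z) this
      calc |(a z - a x) * (Real.cos ((x - z) / 2) / Real.sin ((x - z) / 2)) * (b z - b x)|
          = |a z - a x| * |Real.cos ((x - z) / 2) / Real.sin ((x - z) / 2)| * |b z - b x| := by
            rw [abs_mul, abs_mul]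
        _ ≤ (Ca * δ) * (π / δ) * (Cb * δ) := by
            have hc0 : (0:ℝ) ≤ Ca * δ := by positivity
            have hp0 : (0:ℝ) ≤ π / δ := by positivity
            exact mul_le_mul (mul_le_mul h1 h2 (abs_nonneg _) hc0) h3 (abs_nonneg _)
              (by positivity)
        _ = Ca * Cb * π * δ := by field_simp
    have hL := hterm (x - δ) ⟨by linarith, by linarith⟩
      (by rw [show x - (x - δ) = δ by ring, abs_of_pos hδ0])
    have hR := hterm (x + δ) ⟨by linarith, by linarith⟩
      (by rw [show x - (x + δ) = -δ by ring, abs_neg, abs_of_pos hδ0])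
    calc |B δ| ≤ |(a (x - δ) - a x) * (Real.cos ((x - (x - δ)) / 2) / Real.sin ((x - (x - δ)) / 2))
          * (b (x - δ) - b x)|
        + |(a (x + δ) - a x) * (Real.cos ((x - (x + δ)) / 2) / Real.sin ((x - (x + δ)) / 2))
          * (b (x + δ) - b x)| := by
          rw [hBdef]; exact abs_sub _ _
      _ ≤ Ca * Cb * π * δ + Ca * Cb * π * δ := add_le_add hL hR
      _ = 2 * (Ca * Cb * π) * δ := by ring
  have hBtend : Filter.Tendsto B (nhdsWithin (0:ℝ) (Set.Ioi 0)) (nhds 0) := by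
    have hlin : Filter.Tendsto (fun δ : ℝ => 2 * (Ca * Cb * π) * δ)
        (nhdsWithin (0:ℝ) (Set.Ioi 0)) (nhds 0) := by
      have h := (continuous_const.mul continuous_id).tendsto (0:ℝ)
        (f := fun δ : ℝ => 2 * (Ca * Cb * π) * δ)
      simpa using h.mono_left nhdsWithin_le_nhds
    refine squeeze_zero_norm' ?_ hlin
    filter_upwards [Ioo_mem_nhdsGT_of_mem ⟨le_refl (0:ℝ), hπ⟩] with δ hδ
    simpa [Real.norm_eq_abs] using hBbound δ hδ
  -- combine
  have hcomb := (hG1.sub (hG2.const_mul (a x))).sub hBtend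
  have hItend : Filter.Tendsto (fun δ => ∫ y in Sset x δ,
      (deriv a y / Real.tan ((x - y) / 2) +
        (a y - a x) / (2 * Real.sin ((x - y) / 2) ^ 2)) * (b x - b y))
      (nhdsWithin (0:ℝ) (Set.Ioi 0)) (nhds
        ((∫ y in Set.Icc (x - π) (x + π), (a y * deriv b y - a x * deriv b x) *
            (Real.cos ((x - y) / 2) / Real.sin ((x - y) / 2)))
          - a x * ∫ y in Set.Icc (x - π) (x + π), (deriv b y - deriv b x) *
            (Real.cos ((x - y) / 2) / Real.sin ((x - y) / 2)))) := by
    have heq : (fun δ => (∫ y in Sset x δ, (a y * deriv b y) / Real.tan ((x - y) / 2))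
        - a x * (∫ y in Sset x δ, deriv b y / Real.tan ((x - y) / 2)) - B δ)
        =ᶠ[nhdsWithin (0:ℝ) (Set.Ioi 0)] (fun δ => ∫ y in Sset x δ,
          (deriv a y / Real.tan ((x - y) / 2) +
            (a y - a x) / (2 * Real.sin ((x - y) / 2) ^ 2)) * (b x - b y)) := by
      filter_upwards [Ioo_mem_nhdsGT_of_mem ⟨le_refl (0:ℝ), hπ⟩] with δ hδ
      have h := split_ibp x δ hδ.1 hδ.2 a b haCD hbCD
      rw [hBdef]
      linarith [h]
    have := Filter.Tendsto.congr' heq hcomb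
    simpa using this
  rw [hG1.limUnder_eq, hG2.limUnder_eq, hItend.limUnder_eq]
  ring

/-- Integration-by-parts representation of the commutator. -/
theorem commutator_ibp_representation (α : ℝ) (hα0 : 0 < α) (hα1 : α < 1)
    (a b : ℝ → ℝ) (hpa : Function.Periodic a (2 * π)) (hpb : Function.Periodic b (2 * π))
    (haC : MemCka 2 α a) (hbC : MemCka 1 α b) (x : ℝ) :
    Hil (fun y => a y * deriv b y) x - a x * Hil (deriv b) x =
      (1 / (2 * π)) * pvLim (fun δ =>
        ∫ y in {y : ℝ | y ∈ Set.Icc (x - π) (x + π) ∧ δ ≤ |x - y|},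
          (deriv a y / Real.tan ((x - y) / 2) +
            (a y - a x) / (2 * Real.sin ((x - y) / 2) ^ 2)) * (b x - b y)) := by
  obtain ⟨haCD, _⟩ := haC
  obtain ⟨hbCD, Kb, hKb⟩ := hbC
  have ha2 : ContDiff ℝ 2 a := by exact_mod_cast haCD
  have hb1 : ContDiff ℝ 1 b := by exact_mod_cast hbCD
  simp only [Function.iterate_one] at hKb
  exact commutator_ibp_representation' α hα0 hα1 a b ha2 hb1 Kb hKb x
end

section
/- Let f : ℝ → ℝ be a 2π-periodic continuously differentiable function with Hölder continuous derivative. Then for every x ∈ ℝ, the Hilbert transform of its derivative equals the Zygmund operator applied to f: (1/2π) p.v. ∫_{−π}^{π} f'(y)/tan((x−y)/2) dy = (1/4π) p.v. ∫_{−π}^{π} (f(x) − f(x−y))/sin²(y/2) dy, i.e. H[f'] = Λ[f]. -/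
open Real Filter MeasureTheory Set

lemma my_one_div_tan (t : ℝ) : 1 / Real.tan t = Real.cos t / Real.sin t := by
  rw [Real.tan_eq_sin_div_cos, one_div, inv_div]

lemma my_div_tan (a t : ℝ) : a / Real.tan t = a * (Real.cos t / Real.sin t) := by
  rw [div_eq_mul_inv, ← one_div, my_one_div_tan]

lemma my_sin_pos {t : ℝ} (h1 : 0 < t) (h2 : t ≤ π) : 0 < Real.sin (t / 2) :=
  Real.sin_pos_of_pos_of_lt_pi (by linarith) (by linarith [Real.pi_pos])

lemma my_sin_lower {t : ℝ} (h1 : 0 < t) (h2 : t ≤ π) : t / π ≤ Real.sin (t / 2) := by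
  have := Real.mul_le_sin (x := t / 2) (by linarith) (by linarith)
  calc t / π = 2 / π * (t / 2) := by field_simp
    _ ≤ Real.sin (t / 2) := this

lemma my_inv_sin_le {t : ℝ} (h1 : 0 < t) (h2 : t ≤ π) : 1 / Real.sin (t / 2) ≤ π / t := by
  have hs := my_sin_pos h1 h2
  have hl := my_sin_lower h1 h2
  rw [div_le_div_iff₀ hs h1]
  have hπ := Real.pi_pos
  calc 1 * t = (t / π) * π := by field_simp
    _ ≤ Real.sin (t/2) * π := by nlinarith
    _ = π * Real.sin (t/2) := by ring

lemma my_cot_le {t : ℝ} (h1 : 0 < t) (h2 : t ≤ π) :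
    Real.cos (t / 2) / Real.sin (t / 2) ≤ π / t := by
  have hs := my_sin_pos h1 h2
  have := my_inv_sin_le h1 h2
  have hc : Real.cos (t/2) ≤ 1 := Real.cos_le_one _
  calc Real.cos (t/2) / Real.sin (t/2) ≤ 1 / Real.sin (t/2) := by
        exact (div_le_div_iff_of_pos_right hs).mpr hc
    _ ≤ π / t := this

lemma my_cot_nonneg {t : ℝ} (h1 : 0 < t) (h2 : t ≤ π) :
    0 ≤ Real.cos (t / 2) / Real.sin (t / 2) := by
  have hs := my_sin_pos h1 h2
  have hc : 0 ≤ Real.cos (t/2) := Real.cos_nonneg_of_mem_Icc ⟨by linarith [Real.pi_pos], by linarith⟩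
  positivity

lemma my_hasDerivAt_v {t : ℝ} (ht : Real.sin (t / 2) ≠ 0) :
    HasDerivAt (fun s => -2 * (Real.cos (s / 2) / Real.sin (s / 2)))
      (1 / Real.sin (t / 2) ^ 2) t := by
  have hhalf : HasDerivAt (fun s : ℝ => s / 2) (1 / 2) t := by
    simpa using (hasDerivAt_id t).div_const 2
  have hc : HasDerivAt (fun s : ℝ => Real.cos (s / 2)) (-Real.sin (t / 2) * (1 / 2)) t :=
    by have := (Real.hasDerivAt_cos (t / 2)).comp t hhalf; exact this
  have hsin : HasDerivAt (fun s : ℝ => Real.sin (s / 2)) (Real.cos (t / 2) * (1 / 2)) t :=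
    by have := (Real.hasDerivAt_sin (t / 2)).comp t hhalf; exact this
  have hd := (hc.div hsin ht).const_mul (-2 : ℝ)
  refine hd.congr_deriv ?_
  have hpyth := Real.sin_sq_add_cos_sq (t / 2)
  field_simp
  ring_nf
  ring_nf at hpyth
  nlinarith [hpyth]

lemma my_setA (x δ : ℝ) (h0 : 0 < δ) (hπ : δ ≤ π) :
    {y : ℝ | y ∈ Icc (x - π) (x + π) ∧ δ ≤ |x - y|} =
      Icc (x - π) (x - δ) ∪ Icc (x + δ) (x + π) := by
  ext y
  simp only [mem_setOf_eq, mem_Icc, mem_union, le_abs, neg_sub]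
  constructor
  · rintro ⟨⟨h1, h2⟩, h3 | h3⟩
    · exact Or.inl ⟨h1, by linarith⟩
    · exact Or.inr ⟨by linarith, h2⟩
  · rintro (⟨h1, h2⟩ | ⟨h1, h2⟩)
    · exact ⟨⟨h1, by linarith⟩, Or.inl (by linarith)⟩
    · exact ⟨⟨by linarith, h2⟩, Or.inr (by linarith)⟩

lemma my_setZ (δ : ℝ) (h0 : 0 < δ) :
    {y : ℝ | δ ≤ |y| ∧ |y| ≤ π} = Icc (-π) (-δ) ∪ Icc δ π := by
  ext y
  simp only [mem_setOf_eq, mem_Icc, mem_union, le_abs, abs_le, neg_sub, le_neg]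
  constructor
  · rintro ⟨h1 | h1, h2, h3⟩
    · exact Or.inr ⟨h1, h3⟩
    · exact Or.inl ⟨h2, by linarith⟩
  · rintro (⟨h1, h2⟩ | ⟨h1, h2⟩)
    · exact ⟨Or.inr (by linarith), by constructor <;> linarith⟩
    · exact ⟨Or.inl h1, by constructor <;> linarith⟩

lemma my_hasDerivAt_u (f : ℝ → ℝ) (hdf : Differentiable ℝ f) (x t : ℝ) :
    HasDerivAt (fun s => 2 * f x - f (x - s) - f (x + s))
      (deriv f (x - t) - deriv f (x + t)) t := by
  have h1 : HasDerivAt (fun s : ℝ => x - s) (-1) t := by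
    simpa using (hasDerivAt_id t).const_sub x
  have h2 : HasDerivAt (fun s : ℝ => x + s) 1 t := by
    simpa using (hasDerivAt_id t).const_add x
  have hf1 : HasDerivAt (fun s : ℝ => f (x - s)) (deriv f (x - t) * (-1)) t :=
    (hdf (x - t)).hasDerivAt.comp t h1
  have hf2 : HasDerivAt (fun s : ℝ => f (x + s)) (deriv f (x + t) * 1) t :=
    (hdf (x + t)).hasDerivAt.comp t h2
  have := ((hasDerivAt_const t (2 * f x)).sub hf1).sub hf2
  refine this.congr_deriv ?_
  ring

lemma my_G_contOn (f : ℝ → ℝ) (hc : Continuous (deriv f)) (x : ℝ) (s : Set ℝ)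
    (hs : ∀ t ∈ s, Real.sin (t / 2) ≠ 0) :
    ContinuousOn (fun t => (deriv f (x - t) - deriv f (x + t)) *
      (Real.cos (t / 2) / Real.sin (t / 2))) s := by
  apply ContinuousOn.mul
  · exact ((hc.comp (continuous_const.sub continuous_id)).sub
      (hc.comp (continuous_const.add continuous_id))).continuousOn
  · exact ContinuousOn.div
      (Real.continuous_cos.comp (continuous_id.div_const 2)).continuousOn
      (Real.continuous_sin.comp (continuous_id.div_const 2)).continuousOn hs

lemma my_G_bound (f : ℝ → ℝ) (x K α : ℝ) (hα0 : 0 < α)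
    (hK : ∀ a b : ℝ, |deriv f a - deriv f b| ≤ K * |a - b| ^ α)
    {t : ℝ} (ht : t ∈ Ioc 0 π) :
    ‖(deriv f (x - t) - deriv f (x + t)) * (Real.cos (t / 2) / Real.sin (t / 2))‖ ≤
      K * 2 ^ α * π * t ^ (α - 1) := by
  obtain ⟨ht0, htπ⟩ := ht
  have hK0 : 0 ≤ K := le_trans (abs_nonneg _) (by simpa using hK 0 1)
  have h1 : |deriv f (x - t) - deriv f (x + t)| ≤ K * 2 ^ α * t ^ α := by
    have := hK (x - t) (x + t)
    have he : |x - t - (x + t)| = 2 * t := by rw [abs_of_nonpos] <;> [skip; linarith] ; ring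
    rw [he] at this
    rwa [Real.mul_rpow (by norm_num) ht0.le, ← mul_assoc] at this
  have h2 : |Real.cos (t / 2) / Real.sin (t / 2)| ≤ π / t := by
    rw [abs_of_nonneg (my_cot_nonneg ht0 htπ)]
    exact my_cot_le ht0 htπ
  rw [Real.norm_eq_abs, abs_mul]
  calc |deriv f (x - t) - deriv f (x + t)| * |Real.cos (t / 2) / Real.sin (t / 2)| ≤
      (K * 2 ^ α * t ^ α) * (π / t) := by
        apply mul_le_mul h1 h2 (abs_nonneg _)
        positivity
    _ = K * 2 ^ α * π * t ^ (α - 1) := by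
        rw [Real.rpow_sub_one ht0.ne']
        field_simp

lemma my_G_integrableOn (f : ℝ → ℝ) (hc : Continuous (deriv f)) (x K α : ℝ)
    (hα0 : 0 < α)
    (hK : ∀ a b : ℝ, |deriv f a - deriv f b| ≤ K * |a - b| ^ α) :
    IntegrableOn (fun t => (deriv f (x - t) - deriv f (x + t)) *
      (Real.cos (t / 2) / Real.sin (t / 2))) (Ioc 0 π) := by
  have hdom : IntegrableOn (fun t : ℝ => K * 2 ^ α * π * t ^ (α - 1)) (Ioc 0 π) := by
    have := (intervalIntegral.intervalIntegrable_rpow' (a := 0) (b := π)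
      (r := α - 1) (by linarith)).const_mul (K * 2 ^ α * π)
    rwa [intervalIntegrable_iff_integrableOn_Ioc_of_le Real.pi_pos.le] at this
  apply Integrable.mono' hdom
  · exact (my_G_contOn f hc x _ (fun t ht => (my_sin_pos ht.1 ht.2).ne')).aestronglyMeasurable
      measurableSet_Ioc
  · filter_upwards [ae_restrict_mem measurableSet_Ioc] with t ht
    exact my_G_bound f x K α hα0 hK ht

lemma my_A_eq (f : ℝ → ℝ) (hc : Continuous (deriv f)) (x δ : ℝ) (h0 : 0 < δ) (hπ : δ ≤ π) :
    (∫ y in {y : ℝ | y ∈ Icc (x - π) (x + π) ∧ δ ≤ |x - y|},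
        deriv f y / Real.tan ((x - y) / 2)) =
      ∫ t in δ..π, (deriv f (x - t) - deriv f (x + t)) *
        (Real.cos (t / 2) / Real.sin (t / 2)) := by
  have hπ0 := Real.pi_pos
  set F : ℝ → ℝ := fun y => deriv f y * (Real.cos ((x - y) / 2) / Real.sin ((x - y) / 2))
    with hF
  have hFcont : ∀ s : Set ℝ, (∀ y ∈ s, Real.sin ((x - y) / 2) ≠ 0) → ContinuousOn F s := by
    intro s hs
    apply hc.continuousOn.mul
    exact ContinuousOn.div
      (Real.continuous_cos.comp ((continuous_const.sub continuous_id).div_const 2)).continuousOn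
      (Real.continuous_sin.comp ((continuous_const.sub continuous_id).div_const 2)).continuousOn
      hs
  have hne1 : ∀ y ∈ Icc (x - π) (x - δ), Real.sin ((x - y) / 2) ≠ 0 := by
    intro y hy
    exact (my_sin_pos (by linarith [hy.2]) (by linarith [hy.1])).ne'
  have hne2 : ∀ y ∈ Icc (x + δ) (x + π), Real.sin ((x - y) / 2) ≠ 0 := by
    intro y hy
    rw [show (x - y) / 2 = -((y - x) / 2) by ring, Real.sin_neg]
    exact neg_ne_zero.mpr (my_sin_pos (by linarith [hy.1]) (by linarith [hy.2])).ne'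
  have hint1 : IntegrableOn F (Icc (x - π) (x - δ)) := by
    exact (hFcont _ hne1).integrableOn_Icc
  have hint2 : IntegrableOn F (Icc (x + δ) (x + π)) := by
    exact (hFcont _ hne2).integrableOn_Icc
  have hdisj : Disjoint (Icc (x - π) (x - δ)) (Icc (x + δ) (x + π)) := by
    apply Set.disjoint_left.mpr
    rintro y ⟨_, h2⟩ ⟨h3, _⟩
    linarith
  calc (∫ y in {y : ℝ | y ∈ Icc (x - π) (x + π) ∧ δ ≤ |x - y|},
        deriv f y / Real.tan ((x - y) / 2))
      = ∫ y in Icc (x - π) (x - δ) ∪ Icc (x + δ) (x + π), F y := by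
        rw [my_setA x δ h0 hπ]; simp only [my_div_tan]; rfl
    _ = (∫ y in Icc (x - π) (x - δ), F y) + ∫ y in Icc (x + δ) (x + π), F y := by
        exact setIntegral_union hdisj measurableSet_Icc hint1 hint2
    _ = (∫ y in (x - π)..(x - δ), F y) + ∫ y in (x + δ)..(x + π), F y := by
        rw [integral_Icc_eq_integral_Ioc, integral_Icc_eq_integral_Ioc,
          intervalIntegral.integral_of_le (by linarith), intervalIntegral.integral_of_le
          (by linarith)]
    _ = (∫ t in δ..π, F (x - t)) + ∫ t in δ..π, F (x + t) := by
        rw [intervalIntegral.integral_comp_sub_left F x,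
          intervalIntegral.integral_comp_add_left F x]
    _ = (∫ t in δ..π, deriv f (x - t) * (Real.cos (t / 2) / Real.sin (t / 2))) +
        ∫ t in δ..π, -(deriv f (x + t) * (Real.cos (t / 2) / Real.sin (t / 2))) := by
        simp only [hF, sub_sub_cancel, sub_add_cancel_left, neg_div, Real.cos_neg,
          Real.sin_neg, div_neg, mul_neg]
    _ = ∫ t in δ..π, (deriv f (x - t) - deriv f (x + t)) *
        (Real.cos (t / 2) / Real.sin (t / 2)) := by
        rw [intervalIntegral.integral_neg, ← sub_eq_add_neg, ← intervalIntegral.integral_sub]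
        · congr 1; ext t; ring
        · apply ContinuousOn.intervalIntegrable
          apply (hc.comp (continuous_const.sub continuous_id)).continuousOn.mul
          apply ContinuousOn.div
            (Real.continuous_cos.comp (continuous_id.div_const 2)).continuousOn
            (Real.continuous_sin.comp (continuous_id.div_const 2)).continuousOn
          intro t ht
          rw [uIcc_of_le (by linarith)] at ht
          simp only [id_eq]
          exact (my_sin_pos (by linarith [ht.1]) (by linarith [ht.2])).ne'
        · apply ContinuousOn.intervalIntegrable
          apply (hc.comp (continuous_const.add continuous_id)).continuousOn.mul
          apply ContinuousOn.div
            (Real.continuous_cos.comp (continuous_id.div_const 2)).continuousOn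
            (Real.continuous_sin.comp (continuous_id.div_const 2)).continuousOn
          intro t ht
          rw [uIcc_of_le (by linarith)] at ht
          simp only [id_eq]
          exact (my_sin_pos (by linarith [ht.1]) (by linarith [ht.2])).ne'

lemma my_Z_eq (f : ℝ → ℝ) (hdf : Differentiable ℝ f) (hc : Continuous (deriv f))
    (x δ : ℝ) (h0 : 0 < δ) (hπ : δ ≤ π) :
    (∫ y in {y : ℝ | δ ≤ |y| ∧ |y| ≤ π}, (f x - f (x - y)) / Real.sin (y / 2) ^ 2) =
      2 * (Real.cos (δ / 2) / Real.sin (δ / 2)) * (2 * f x - f (x - δ) - f (x + δ)) +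
      2 * ∫ t in δ..π, (deriv f (x - t) - deriv f (x + t)) *
        (Real.cos (t / 2) / Real.sin (t / 2)) := by
  have hπ0 := Real.pi_pos
  have hfc : Continuous f := hdf.continuous
  set h : ℝ → ℝ := fun y => (f x - f (x - y)) / Real.sin (y / 2) ^ 2 with hh
  have hne : ∀ t : ℝ, t ∈ Icc δ π → Real.sin (t / 2) ≠ 0 := fun t ht =>
    (my_sin_pos (by linarith [ht.1]) (by linarith [ht.2])).ne'
  have hne' : ∀ y : ℝ, y ∈ Icc (-π) (-δ) → Real.sin (y / 2) ≠ 0 := by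
    intro y hy
    rw [show y / 2 = -(-y / 2) by ring, Real.sin_neg, neg_ne_zero]
    exact (my_sin_pos (by linarith [hy.2]) (by linarith [hy.1])).ne'
  have hcont : ∀ s : Set ℝ, (∀ y ∈ s, Real.sin (y / 2) ≠ 0) → ContinuousOn h s := by
    intro s hs
    apply ContinuousOn.div
      (continuous_const.sub (hfc.comp (continuous_const.sub continuous_id))).continuousOn
      ((Real.continuous_sin.comp (continuous_id.div_const 2)).pow 2).continuousOn
    intro y hy
    simp only [id_eq]
    exact pow_ne_zero 2 (hs y hy)
  have hint1 : IntegrableOn h (Icc (-π) (-δ)) := (hcont _ hne').integrableOn_Icc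
  have hint2 : IntegrableOn h (Icc δ π) := (hcont _ hne).integrableOn_Icc
  have hdisj : Disjoint (Icc (-π) (-δ)) (Icc δ π) := by
    apply Set.disjoint_left.mpr
    rintro y ⟨_, h2⟩ ⟨h3, _⟩
    linarith
  have hucont : Continuous fun t : ℝ => deriv f (x - t) - deriv f (x + t) :=
    (hc.comp (continuous_const.sub continuous_id)).sub
      (hc.comp (continuous_const.add continuous_id))
  have hGint : IntervalIntegrable (fun t => (deriv f (x - t) - deriv f (x + t)) *
      (Real.cos (t / 2) / Real.sin (t / 2))) volume δ π := by
    apply ContinuousOn.intervalIntegrable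
    apply hucont.continuousOn.mul
    apply ContinuousOn.div
      (Real.continuous_cos.comp (continuous_id.div_const 2)).continuousOn
      (Real.continuous_sin.comp (continuous_id.div_const 2)).continuousOn
    intro t ht
    rw [uIcc_of_le (by linarith)] at ht
    simp only [id_eq]
    exact hne t ht
  have step1 : (∫ y in {y : ℝ | δ ≤ |y| ∧ |y| ≤ π}, h y) =
      ∫ t in δ..π, (2 * f x - f (x - t) - f (x + t)) * (1 / Real.sin (t / 2) ^ 2) := by
    calc (∫ y in {y : ℝ | δ ≤ |y| ∧ |y| ≤ π}, h y)
        = (∫ y in Icc (-π) (-δ), h y) + ∫ y in Icc δ π, h y := by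
          rw [my_setZ δ h0]
          exact setIntegral_union hdisj measurableSet_Icc hint1 hint2
      _ = (∫ y in (-π)..(-δ), h y) + ∫ y in δ..π, h y := by
          rw [integral_Icc_eq_integral_Ioc, integral_Icc_eq_integral_Ioc,
            intervalIntegral.integral_of_le (by linarith),
            intervalIntegral.integral_of_le (by linarith)]
      _ = (∫ t in δ..π, h (-t)) + ∫ t in δ..π, h t := by
          rw [intervalIntegral.integral_comp_neg h]
      _ = ∫ t in δ..π, (2 * f x - f (x - t) - f (x + t)) * (1 / Real.sin (t / 2) ^ 2) := by
          rw [← intervalIntegral.integral_add]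
          · apply intervalIntegral.integral_congr
            intro t ht
            rw [uIcc_of_le (by linarith)] at ht
            have hs := hne t ht
            simp only [hh, sub_neg_eq_add, neg_div, Real.sin_neg, neg_sq]
            field_simp
            ring
          · apply ContinuousOn.intervalIntegrable
            apply (hcont _ hne').comp (continuous_neg).continuousOn
            intro t ht
            rw [uIcc_of_le (by linarith)] at ht
            exact ⟨by simp; linarith [ht.2], by simp; linarith [ht.1]⟩
          · apply ContinuousOn.intervalIntegrable
            apply hcont _ hne |>.mono
            rw [uIcc_of_le (by linarith)]
  have hvderiv : ∀ t ∈ uIcc δ π,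
      HasDerivAt (fun s => -2 * (Real.cos (s / 2) / Real.sin (s / 2)))
        (1 / Real.sin (t / 2) ^ 2) t := by
    intro t ht
    rw [uIcc_of_le (by linarith)] at ht
    exact my_hasDerivAt_v (hne t ht)
  have huderiv : ∀ t ∈ uIcc δ π,
      HasDerivAt (fun s => 2 * f x - f (x - s) - f (x + s))
        (deriv f (x - t) - deriv f (x + t)) t := fun t _ => my_hasDerivAt_u f hdf x t
  have hu'int : IntervalIntegrable (fun t => deriv f (x - t) - deriv f (x + t)) volume δ π :=
    hucont.intervalIntegrable δ π
  have hv'int : IntervalIntegrable (fun t => 1 / Real.sin (t / 2) ^ 2) volume δ π := by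
    apply ContinuousOn.intervalIntegrable
    apply ContinuousOn.div continuousOn_const
      ((Real.continuous_sin.comp (continuous_id.div_const 2)).pow 2).continuousOn
    intro t ht
    rw [uIcc_of_le (by linarith)] at ht
    simp only [id_eq]
    exact pow_ne_zero 2 (hne t ht)
  have ibp := intervalIntegral.integral_mul_deriv_eq_deriv_mul huderiv hvderiv hu'int hv'int
  rw [step1, ibp]
  have hvπ : -2 * (Real.cos (π / 2) / Real.sin (π / 2)) = 0 := by
    rw [Real.cos_pi_div_two]; ring
  rw [hvπ]
  have : (∫ t in δ..π, (deriv f (x - t) - deriv f (x + t)) *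
      (-2 * (Real.cos (t / 2) / Real.sin (t / 2)))) =
      -2 * ∫ t in δ..π, (deriv f (x - t) - deriv f (x + t)) *
        (Real.cos (t / 2) / Real.sin (t / 2)) := by
    rw [← intervalIntegral.integral_const_mul]
    apply intervalIntegral.integral_congr
    intro t _
    ring
  rw [this]
  ring

lemma my_rpow_tendsto {α : ℝ} (hα0 : 0 < α) (C : ℝ) :
    Tendsto (fun δ : ℝ => C * δ ^ α) (nhdsWithin 0 (Set.Ioi 0)) (nhds 0) := by
  have h : ContinuousAt (fun x : ℝ => x ^ α) 0 :=
    (Real.continuousAt_rpow_const 0 α (Or.inr hα0.le))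
  have h2 : Tendsto (fun δ : ℝ => δ ^ α) (nhdsWithin 0 (Set.Ioi 0)) (nhds ((0:ℝ) ^ α)) :=
    h.tendsto.mono_left nhdsWithin_le_nhds
  have h3 := h2.const_mul C
  simpa [Real.zero_rpow hα0.ne'] using h3

lemma my_r_bound (f : ℝ → ℝ) (hc : Continuous (deriv f)) (x K α : ℝ) (hα0 : 0 < α)
    (hK : ∀ a b : ℝ, |deriv f a - deriv f b| ≤ K * |a - b| ^ α)
    {δ : ℝ} (h0 : 0 < δ) (hπ : δ ≤ π) :
    ‖∫ t in Ioc 0 δ, (deriv f (x - t) - deriv f (x + t)) *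
      (Real.cos (t / 2) / Real.sin (t / 2))‖ ≤ (K * 2 ^ α * π / α) * δ ^ α := by
  have hK0 : 0 ≤ K := le_trans (abs_nonneg _) (by simpa using hK 0 1)
  rw [← intervalIntegral.integral_of_le h0.le]
  have hb : ∀ᵐ t ∂(volume.restrict (Set.uIoc 0 δ)),
      ‖(deriv f (x - t) - deriv f (x + t)) * (Real.cos (t / 2) / Real.sin (t / 2))‖ ≤
        K * 2 ^ α * π * t ^ (α - 1) := by
    rw [Set.uIoc_of_le h0.le]
    filter_upwards [ae_restrict_mem measurableSet_Ioc] with t ht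
    exact my_G_bound f x K α hα0 hK ⟨ht.1, ht.2.trans hπ⟩
  have hgint : IntervalIntegrable (fun t : ℝ => K * 2 ^ α * π * t ^ (α - 1)) volume 0 δ :=
    (intervalIntegral.intervalIntegrable_rpow' (by linarith)).const_mul _
  refine (intervalIntegral.norm_integral_le_abs_of_norm_le hb hgint).trans ?_
  rw [intervalIntegral.integral_const_mul, integral_rpow (Or.inl (by linarith))]
  rw [sub_add_cancel, Real.zero_rpow hα0.ne']
  rw [sub_zero, abs_of_nonneg (by positivity)]
  rw [div_mul_eq_mul_div]
  apply le_of_eq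
  ring

lemma my_u_bound (f : ℝ → ℝ) (hdf : Differentiable ℝ f) (hc : Continuous (deriv f))
    (x K α : ℝ) (hα0 : 0 < α)
    (hK : ∀ a b : ℝ, |deriv f a - deriv f b| ≤ K * |a - b| ^ α)
    {δ : ℝ} (h0 : 0 < δ) :
    |2 * f x - f (x - δ) - f (x + δ)| ≤ K * 2 ^ α * δ ^ (α + 1) / (α + 1) := by
  have hK0 : 0 ≤ K := le_trans (abs_nonneg _) (by simpa using hK 0 1)
  have hucont : Continuous fun t : ℝ => deriv f (x - t) - deriv f (x + t) :=
    (hc.comp (continuous_const.sub continuous_id)).sub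
      (hc.comp (continuous_const.add continuous_id))
  have ftc : (∫ t in (0:ℝ)..δ, (deriv f (x - t) - deriv f (x + t))) =
      (2 * f x - f (x - δ) - f (x + δ)) - (2 * f x - f (x - 0) - f (x + 0)) :=
    intervalIntegral.integral_eq_sub_of_hasDerivAt
      (fun t _ => my_hasDerivAt_u f hdf x t) (hucont.intervalIntegrable 0 δ)
  rw [sub_zero, add_zero] at ftc
  have h2 : 2 * f x - f (x - δ) - f (x + δ) =
      ∫ t in (0:ℝ)..δ, (deriv f (x - t) - deriv f (x + t)) := by
    rw [ftc]; ring
  rw [h2, ← Real.norm_eq_abs]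
  have hb : ∀ᵐ t ∂(volume.restrict (Set.uIoc 0 δ)),
      ‖deriv f (x - t) - deriv f (x + t)‖ ≤ K * 2 ^ α * t ^ α := by
    rw [Set.uIoc_of_le h0.le]
    filter_upwards [ae_restrict_mem measurableSet_Ioc] with t ht
    have := hK (x - t) (x + t)
    have he : |x - t - (x + t)| = 2 * t := by
      rw [abs_of_nonpos (by linarith [ht.1])]; ring
    rw [he, Real.mul_rpow (by norm_num) ht.1.le, ← mul_assoc] at this
    exact this
  have hgint : IntervalIntegrable (fun t : ℝ => K * 2 ^ α * t ^ α) volume 0 δ :=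
    (intervalIntegral.intervalIntegrable_rpow' (by linarith)).const_mul _
  refine (intervalIntegral.norm_integral_le_abs_of_norm_le hb hgint).trans ?_
  rw [intervalIntegral.integral_const_mul, integral_rpow (Or.inl (by linarith)),
    Real.zero_rpow (by linarith), sub_zero, abs_of_nonneg (by positivity)]
  apply le_of_eq
  ring

lemma my_B_tendsto (f : ℝ → ℝ) (hdf : Differentiable ℝ f) (hc : Continuous (deriv f))
    (x K α : ℝ) (hα0 : 0 < α)
    (hK : ∀ a b : ℝ, |deriv f a - deriv f b| ≤ K * |a - b| ^ α) :
    Tendsto (fun δ => 2 * (Real.cos (δ / 2) / Real.sin (δ / 2)) *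
        (2 * f x - f (x - δ) - f (x + δ)))
      (nhdsWithin 0 (Set.Ioi 0)) (nhds 0) := by
  have hK0 : 0 ≤ K := le_trans (abs_nonneg _) (by simpa using hK 0 1)
  have hπ0 := Real.pi_pos
  refine squeeze_zero_norm' ?_ (my_rpow_tendsto hα0 (2 * π * (K * 2 ^ α) / (α + 1)))
  · filter_upwards [Ioo_mem_nhdsGT_of_mem (by constructor <;> [exact le_refl 0; exact hπ0] :
      (0:ℝ) ∈ Ico 0 π)] with δ hδ
    obtain ⟨h0, hπ⟩ := hδ
    have hcot1 := my_cot_le h0 hπ.le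
    have hcot0 := my_cot_nonneg h0 hπ.le
    have hub := my_u_bound f hdf hc x K α hα0 hK h0
    rw [Real.norm_eq_abs, abs_mul, abs_of_nonneg (by positivity)]
    calc 2 * (Real.cos (δ / 2) / Real.sin (δ / 2)) * |2 * f x - f (x - δ) - f (x + δ)|
        ≤ 2 * (π / δ) * (K * 2 ^ α * δ ^ (α + 1) / (α + 1)) := by
          apply mul_le_mul _ hub (abs_nonneg _) (by positivity)
          apply mul_le_mul_of_nonneg_left hcot1 (by norm_num)
      _ = (2 * π * (K * 2 ^ α) / (α + 1)) * δ ^ α := by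
          rw [Real.rpow_add h0, Real.rpow_one]
          field_simp

/-- `H[f'] = Λ[f]` (Hilbert transform of the derivative equals the
Zygmund operator). -/
theorem hilbert_deriv_eq_zygmund (f : ℝ → ℝ) (hper : Function.Periodic f (2 * π))
    (hf : ContDiff ℝ 1 f)
    (hHolder : ∃ K αe : ℝ, 0 < αe ∧ αe ≤ 1 ∧
      ∀ x y : ℝ, |deriv f x - deriv f y| ≤ K * |x - y| ^ αe) :
    ∀ x : ℝ, Hil (deriv f) x =
      (1 / (4 * π)) * pvLim (fun δ =>
        ∫ y in {y : ℝ | δ ≤ |y| ∧ |y| ≤ π},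
          (f x - f (x - y)) / Real.sin (y / 2) ^ 2) := by
  intro x
  obtain ⟨K, α, hα0, hα1, hK⟩ := hHolder
  have hπ0 := Real.pi_pos
  have hdf : Differentiable ℝ f := hf.differentiable one_ne_zero
  have hc : Continuous (deriv f) := hf.continuous_deriv le_rfl
  have hGiL : IntegrableOn (fun t => (deriv f (x - t) - deriv f (x + t)) *
      (Real.cos (t / 2) / Real.sin (t / 2))) (Set.Ioc 0 π) :=
    my_G_integrableOn f hc x K α hα0 hK
  have hIoo : Set.Ioo (0:ℝ) π ∈ nhdsWithin (0:ℝ) (Set.Ioi 0) :=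
    Ioo_mem_nhdsGT_of_mem ⟨le_refl 0, hπ0⟩
  have hr : Tendsto (fun δ => ∫ t in Set.Ioc 0 δ, (deriv f (x - t) - deriv f (x + t)) *
      (Real.cos (t / 2) / Real.sin (t / 2)))
      (nhdsWithin (0:ℝ) (Set.Ioi 0)) (nhds 0) := by
    refine squeeze_zero_norm' ?_ (my_rpow_tendsto hα0 (K * 2 ^ α * π / α))
    filter_upwards [hIoo] with δ hδ
    exact my_r_bound f hc x K α hα0 hK hδ.1 hδ.2.le
  have hsplit : ∀ δ ∈ Set.Ioo (0:ℝ) π,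
      (∫ t in δ..π, (deriv f (x - t) - deriv f (x + t)) *
          (Real.cos (t / 2) / Real.sin (t / 2))) =
        (∫ t in Set.Ioc 0 π, (deriv f (x - t) - deriv f (x + t)) *
          (Real.cos (t / 2) / Real.sin (t / 2))) -
        ∫ t in Set.Ioc 0 δ, (deriv f (x - t) - deriv f (x + t)) *
          (Real.cos (t / 2) / Real.sin (t / 2)) := by
    intro δ hδ
    have hunion : Set.Ioc (0:ℝ) δ ∪ Set.Ioc δ π = Set.Ioc 0 π :=
      Set.Ioc_union_Ioc_eq_Ioc hδ.1.le hδ.2.le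
    have hadd := setIntegral_union (f := fun t => (deriv f (x - t) - deriv f (x + t)) *
        (Real.cos (t / 2) / Real.sin (t / 2))) (μ := volume)
      (Set.Ioc_disjoint_Ioc_of_le le_rfl : Disjoint (Set.Ioc (0:ℝ) δ) (Set.Ioc δ π)) measurableSet_Ioc
      (hGiL.mono_set (by rw [← hunion]; exact Set.subset_union_left))
      (hGiL.mono_set (by rw [← hunion]; exact Set.subset_union_right))
    rw [hunion] at hadd
    rw [intervalIntegral.integral_of_le hδ.2.le, hadd]
    ring
  have hA : Tendsto (fun δ => ∫ y in {y : ℝ | y ∈ Set.Icc (x - π) (x + π) ∧ δ ≤ |x - y|},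
      deriv f y / Real.tan ((x - y) / 2)) (nhdsWithin (0:ℝ) (Set.Ioi 0))
      (nhds (∫ t in Set.Ioc 0 π, (deriv f (x - t) - deriv f (x + t)) *
        (Real.cos (t / 2) / Real.sin (t / 2)))) := by
    have base : Tendsto (fun δ : ℝ => (∫ t in Set.Ioc 0 π,
        (deriv f (x - t) - deriv f (x + t)) * (Real.cos (t / 2) / Real.sin (t / 2))) -
        ∫ t in Set.Ioc 0 δ, (deriv f (x - t) - deriv f (x + t)) *
          (Real.cos (t / 2) / Real.sin (t / 2)))
        (nhdsWithin (0:ℝ) (Set.Ioi 0)) (nhds (_ - 0)) :=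
      Tendsto.sub tendsto_const_nhds hr
    rw [sub_zero] at base
    apply Tendsto.congr' ?_ base
    filter_upwards [hIoo] with δ hδ
    rw [← hsplit δ hδ, ← my_A_eq f hc x δ hδ.1 hδ.2.le]
  have hZ : Tendsto (fun δ => ∫ y in {y : ℝ | δ ≤ |y| ∧ |y| ≤ π},
      (f x - f (x - y)) / Real.sin (y / 2) ^ 2) (nhdsWithin (0:ℝ) (Set.Ioi 0))
      (nhds (2 * ∫ t in Set.Ioc 0 π, (deriv f (x - t) - deriv f (x + t)) *
        (Real.cos (t / 2) / Real.sin (t / 2)))) := by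
    have base2 : Tendsto (fun δ : ℝ => 2 * ((∫ t in Set.Ioc 0 π,
        (deriv f (x - t) - deriv f (x + t)) * (Real.cos (t / 2) / Real.sin (t / 2))) -
        ∫ t in Set.Ioc 0 δ, (deriv f (x - t) - deriv f (x + t)) *
          (Real.cos (t / 2) / Real.sin (t / 2))))
        (nhdsWithin (0:ℝ) (Set.Ioi 0)) (nhds (2 * (_ - 0))) :=
      Tendsto.const_mul 2 (Tendsto.sub tendsto_const_nhds hr)
    have base := (my_B_tendsto f hdf hc x K α hα0 hK).add base2
    rw [sub_zero] at base
    rw [zero_add] at base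
    apply Tendsto.congr' ?_ base
    filter_upwards [hIoo] with δ hδ
    rw [my_Z_eq f hdf hc x δ hδ.1 hδ.2.le, ← hsplit δ hδ]
  simp only [Hil, pvLim]
  rw [hA.limUnder_eq, hZ.limUnder_eq]
  have h4 : (4:ℝ) * π ≠ 0 := by positivity
  field_simp
  ring
end
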